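/- Let x₁, x₂, x₃ ∈ SL(2,ℂ) define an irreducible representation of the group ⟨x₁,x₂,x₃ | [x₁,x₃x₁⁻¹x₂]=1, [x₂,x₁x₂⁻¹x₃]=1⟩ (i.e., the three matrices have no common eigenvector). Then x₁x₂ ≠ x₂x₁, x₁x₃ ≠ x₃x₁, and x₂x₃ ≠ x₃x₂; in particular none of x₁, x₂, x₃ equals ±1. -/

import Mathlib

open Matrix MatrixGroups
open scoped commutatorElement

/-- A nonzero vector `v` is an eigenvector of matrix `m`. -/
def IsEigenvector (m : Matrix (Fin 2) (Fin 2) ℂ) (v : Fin 2 → ℂ) : Prop :=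
  ∃ c : ℂ, m.mulVec v = c • v

section Aux

lemma comm_cancel_right {G : Type*} [Group G] {a b c : G}
    (h : Commute a (b * c)) (hc : Commute a c) : Commute a b := by
  have := h.mul_right hc.inv_right
  simpa [mul_assoc] using this

lemma comm_cancel_left {G : Type*} [Group G] {a b c : G}
    (h : Commute a (b * c)) (hb : Commute a b) : Commute a c := by
  have := hb.inv_right.mul_right h
  simpa [mul_assoc] using this

lemma two_comm_end {V : Type*} [AddCommGroup V] [Module ℂ V] [FiniteDimensional ℂ V]
    [Nontrivial V] (f g : Module.End ℂ V) (h : Commute f g) :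
    ∃ v : V, v ≠ 0 ∧ (∃ c : ℂ, f v = c • v) ∧ (∃ c : ℂ, g v = c • v) := by
  obtain ⟨μ, hμ⟩ := Module.End.exists_eigenvalue f
  have hE : f.eigenspace μ ≠ ⊥ := hμ
  haveI : Nontrivial (f.eigenspace μ) := Submodule.nontrivial_iff_ne_bot.mpr hE
  have hmap : ∀ x ∈ f.eigenspace μ, g x ∈ f.eigenspace μ := fun x hx =>
    Module.End.mapsTo_genEigenspace_of_comm h μ 1 hx
  let g' : Module.End ℂ (f.eigenspace μ) := g.restrict hmap
  obtain ⟨ν, hν⟩ := Module.End.exists_eigenvalue g'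
  obtain ⟨w, hw⟩ := hν.exists_hasEigenvector
  refine ⟨(w : V), ?_, ⟨μ, ?_⟩, ⟨ν, ?_⟩⟩
  · exact fun h0 => hw.2 (Subtype.ext h0)
  · exact Module.End.mem_eigenspace_iff.mp w.2
  · have := hw.apply_eq_smul
    have := congrArg (Subtype.val) this
    simpa [g', LinearMap.restrict_apply] using this

lemma three_comm_end {V : Type*} [AddCommGroup V] [Module ℂ V] [FiniteDimensional ℂ V]
    [Nontrivial V] (f g k : Module.End ℂ V) (hfg : Commute f g) (hfk : Commute f k)
    (hgk : Commute g k) :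
    ∃ v : V, v ≠ 0 ∧ (∃ c : ℂ, f v = c • v) ∧ (∃ c : ℂ, g v = c • v) ∧
      (∃ c : ℂ, k v = c • v) := by
  obtain ⟨μ, hμ⟩ := Module.End.exists_eigenvalue f
  have hE : f.eigenspace μ ≠ ⊥ := hμ
  haveI : Nontrivial (f.eigenspace μ) := Submodule.nontrivial_iff_ne_bot.mpr hE
  have hmapg : ∀ x ∈ f.eigenspace μ, g x ∈ f.eigenspace μ := fun x hx =>
    Module.End.mapsTo_genEigenspace_of_comm hfg μ 1 hx
  have hmapk : ∀ x ∈ f.eigenspace μ, k x ∈ f.eigenspace μ := fun x hx =>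
    Module.End.mapsTo_genEigenspace_of_comm hfk μ 1 hx
  let g' : Module.End ℂ (f.eigenspace μ) := g.restrict hmapg
  let k' : Module.End ℂ (f.eigenspace μ) := k.restrict hmapk
  have hcomm : Commute g' k' := by
    ext x
    have := congrFun (congrArg DFunLike.coe hgk.eq) (x : V)
    simpa [g', k', LinearMap.restrict_apply, Module.End.mul_apply] using this
  obtain ⟨w, hw0, ⟨cg, hcg⟩, ⟨ck, hck⟩⟩ := two_comm_end g' k' hcomm
  refine ⟨(w : V), fun h0 => hw0 (Subtype.ext h0), ⟨μ, Module.End.mem_eigenspace_iff.mp w.2⟩,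
    ⟨cg, ?_⟩, ⟨ck, ?_⟩⟩
  · have := congrArg (Subtype.val) hcg
    simpa [g', LinearMap.restrict_apply] using this
  · have := congrArg (Subtype.val) hck
    simpa [k', LinearMap.restrict_apply] using this

lemma three_comm_matrix (A B C : Matrix (Fin 2) (Fin 2) ℂ)
    (hAB : A * B = B * A) (hAC : A * C = C * A) (hBC : B * C = C * B) :
    ∃ v : Fin 2 → ℂ, v ≠ 0 ∧ IsEigenvector A v ∧ IsEigenvector B v ∧ IsEigenvector C v := by
  have key : ∀ M N : Matrix (Fin 2) (Fin 2) ℂ, M * N = N * M →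
      Commute (Matrix.toLin' M) (Matrix.toLin' N) := by
    intro M N h
    have : Matrix.toLin' (M * N) = Matrix.toLin' (N * M) := congrArg _ h
    simpa [Matrix.toLin'_mul, Commute, SemiconjBy, Module.End.mul_eq_comp] using this
  obtain ⟨v, hv0, ⟨a, ha⟩, ⟨b, hb⟩, ⟨c, hc⟩⟩ :=
    three_comm_end (Matrix.toLin' A) (Matrix.toLin' B) (Matrix.toLin' C)
      (key A B hAB) (key A C hAC) (key B C hBC)
  refine ⟨v, hv0, ⟨a, ?_⟩, ⟨b, ?_⟩, ⟨c, ?_⟩⟩ <;>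
    simpa only [Matrix.toLin'_apply] using ‹_›

end Aux

theorem stmt_10 (x₁ x₂ x₃ : SL(2, ℂ))
    (h1 : ⁅x₁, x₃ * x₁⁻¹ * x₂⁆ = 1)
    (h2 : ⁅x₂, x₁ * x₂⁻¹ * x₃⁆ = 1)
    (hirr : ¬ ∃ v : Fin 2 → ℂ, v ≠ 0 ∧
      IsEigenvector (x₁ : Matrix (Fin 2) (Fin 2) ℂ) v ∧
      IsEigenvector (x₂ : Matrix (Fin 2) (Fin 2) ℂ) v ∧
      IsEigenvector (x₃ : Matrix (Fin 2) (Fin 2) ℂ) v) :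
    (x₁ * x₂ ≠ x₂ * x₁ ∧ x₁ * x₃ ≠ x₃ * x₁ ∧ x₂ * x₃ ≠ x₃ * x₂) ∧
      (∀ x ∈ ({x₁, x₂, x₃} : Set (SL(2, ℂ))),
        (x : Matrix (Fin 2) (Fin 2) ℂ) ≠ 1 ∧ (x : Matrix (Fin 2) (Fin 2) ℂ) ≠ -1) := by
  have c1 : Commute x₁ (x₃ * x₁⁻¹ * x₂) := commutatorElement_eq_one_iff_commute.mp h1
  have c2 : Commute x₂ (x₁ * x₂⁻¹ * x₃) := commutatorElement_eq_one_iff_commute.mp h2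
  -- from a pairwise commutation, all pairs commute, contradicting irreducibility
  have contra : ∀ (c12 : Commute x₁ x₂) (c13 : Commute x₁ x₃) (c23 : Commute x₂ x₃), False := by
    intro c12 c13 c23
    apply hirr
    have m12 : (x₁ : Matrix (Fin 2) (Fin 2) ℂ) * x₂ = (x₂ : Matrix (Fin 2) (Fin 2) ℂ) * x₁ := by
      have := congrArg (fun y : SL(2,ℂ) => (y : Matrix (Fin 2) (Fin 2) ℂ)) c12.eq
      simpa using this
    have m13 : (x₁ : Matrix (Fin 2) (Fin 2) ℂ) * x₃ = (x₃ : Matrix (Fin 2) (Fin 2) ℂ) * x₁ := by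
      have := congrArg (fun y : SL(2,ℂ) => (y : Matrix (Fin 2) (Fin 2) ℂ)) c13.eq
      simpa using this
    have m23 : (x₂ : Matrix (Fin 2) (Fin 2) ℂ) * x₃ = (x₃ : Matrix (Fin 2) (Fin 2) ℂ) * x₂ := by
      have := congrArg (fun y : SL(2,ℂ) => (y : Matrix (Fin 2) (Fin 2) ℂ)) c23.eq
      simpa using this
    exact three_comm_matrix _ _ _ m12 m13 m23
  -- derivations among commutations
  have from12 : Commute x₁ x₂ → Commute x₁ x₃ ∧ Commute x₂ x₃ := by
    intro c12
    have c13' : Commute x₁ (x₃ * x₁⁻¹) := comm_cancel_right c1 c12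
    have c13 : Commute x₁ x₃ := comm_cancel_right c13' (Commute.refl x₁).inv_right
    have c2' : Commute x₂ (x₁ * x₂⁻¹) := c12.symm.mul_right (Commute.refl x₂).inv_right
    have c23 : Commute x₂ x₃ := comm_cancel_left c2 c2'
    exact ⟨c13, c23⟩
  have from13 : Commute x₁ x₃ → Commute x₁ x₂ := by
    intro c13
    have c13' : Commute x₁ (x₃ * x₁⁻¹) := c13.mul_right (Commute.refl x₁).inv_right
    exact comm_cancel_left c1 c13'
  have from23 : Commute x₂ x₃ → Commute x₁ x₂ := by
    intro c23
    have c2' : Commute x₂ (x₁ * x₂⁻¹) := comm_cancel_right c2 c23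
    have c21 : Commute x₂ x₁ := comm_cancel_right c2' (Commute.refl x₂).inv_right
    exact c21.symm
  have contra12 : ¬ Commute x₁ x₂ := by
    intro c12
    obtain ⟨c13, c23⟩ := from12 c12
    exact contra c12 c13 c23
  have ne12 : x₁ * x₂ ≠ x₂ * x₁ := contra12
  have ne13 : x₁ * x₃ ≠ x₃ * x₁ := fun c13 => contra12 (from13 c13)
  have ne23 : x₂ * x₃ ≠ x₃ * x₂ := fun c23 => contra12 (from23 c23)
  refine ⟨⟨ne12, ne13, ne23⟩, ?_⟩
  -- a scalar matrix would commute with everything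
  have scalar_comm : ∀ (x y : SL(2, ℂ)), ((x : Matrix (Fin 2) (Fin 2) ℂ) = 1 ∨
      (x : Matrix (Fin 2) (Fin 2) ℂ) = -1) → Commute x y := by
    intro x y hx
    apply Subtype.ext
    rcases hx with hx | hx <;> simp [hx]
  rintro x (rfl | rfl | rfl)
  · exact ⟨fun h => ne12 (scalar_comm _ x₂ (Or.inl h)),
      fun h => ne12 (scalar_comm _ x₂ (Or.inr h))⟩
  · exact ⟨fun h => ne12 ((scalar_comm _ x₁ (Or.inl h)).symm),
      fun h => ne12 ((scalar_comm _ x₁ (Or.inr h)).symm)⟩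
  · exact ⟨fun h => ne13 ((scalar_comm _ x₁ (Or.inl h)).symm),
      fun h => ne13 ((scalar_comm _ x₁ (Or.inr h)).symm)⟩
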